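/- ⟨η₁| z^h (a⁻)^j k^m w^h |η₂⟩ = z^{-j} Σ_{i=0}^{j} (-1)^i q^{i(i+1-2j)/2} · binom(j,i)_q · (-q^{2i+2m+1} z²w²; q²)_∞ / (q^{2i+2m} z²w²; q²)_∞, where binom(j,i)_q is the q-binomial coefficient (q;q)_j / ((q;q)_{j-i}(q;q)_i). -/

import Mathlib

open Complex

noncomputable section

/-- `a⁻|m⟩ = (1-q^{2m})|m-1⟩`. -/
def aM (q : ℂ) : (ℕ → ℂ) → (ℕ → ℂ) := fun f n => (1 - q ^ (2 * (n + 1))) * f (n + 1)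

/-- `k|m⟩ = q^m|m⟩`. -/
def kk (q : ℂ) : (ℕ → ℂ) → (ℕ → ℂ) := fun f n => q ^ n * f n

/-- `z^h|m⟩ = z^m|m⟩`. -/
def zh (z : ℂ) : (ℕ → ℂ) → (ℕ → ℂ) := fun f n => z ^ n * f n

/-- `qpoch x m = ∏_{j=1}^m (1 - x^j)`. -/
def qpoch (x : ℂ) (m : ℕ) : ℂ := ∏ j ∈ Finset.range m, (1 - x ^ (j + 1))

/-- infinite q-Pochhammer symbol `(x;q)_∞ = ∏_{i≥0} (1 - x q^i)`. -/
def qpochInf (x q : ℂ) : ℂ := ∏' i : ℕ, (1 - x * q ^ i)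

/-- coefficients of `⟨η₁| = Σ_{m≥0}⟨m|/(q;q)_m`. -/
def eta1 (q : ℂ) : ℕ → ℂ := fun m => (qpoch q m)⁻¹

/-- coefficients of `|η₂⟩ = Σ_{m≥0}|2m⟩/(q⁴;q⁴)_m`. -/
def eta2 (q : ℂ) : ℕ → ℂ := fun m => if Even m then (qpoch (q ^ 4) (m / 2))⁻¹ else 0

/-- q-binomial coefficient `binom(j,i)_q = (q;q)_j / ((q;q)_{j-i}(q;q)_i)`. -/
def qbinom (q : ℂ) (j i : ℕ) : ℂ := qpoch q j / (qpoch q (j - i) * qpoch q i)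

open Finset Filter Topology

/-- general q-Pochhammer `(a;p)_n = ∏_{k<n} (1 - a p^k)`. -/
def poch (a p : ℂ) (n : ℕ) : ℂ := ∏ k ∈ Finset.range n, (1 - a * p ^ k)

lemma poch_zero (a p : ℂ) : poch a p 0 = 1 := by simp [poch]

lemma poch_succ (a p : ℂ) (n : ℕ) :
    poch a p (n + 1) = poch a p n * (1 - a * p ^ n) := Finset.prod_range_succ _ _

lemma poch_add (a p : ℂ) (l j : ℕ) :
    poch a p (l + j) = poch a p l * ∏ t ∈ Finset.range j, (1 - a * p ^ (l + t)) := by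
  simp [poch, Finset.prod_range_add, pow_add]

lemma poch_ne_zero {a p : ℂ} (h : ∀ k : ℕ, ‖a‖ * ‖p‖ ^ k < 1) (n : ℕ) :
    poch a p n ≠ 0 := by
  refine Finset.prod_ne_zero_iff.2 fun k _ => ?_
  intro hk
  have h1 : a * p ^ k = 1 := by linear_combination -hk
  have := h k
  rw [← norm_pow, ← norm_mul, h1] at this
  simp at this

lemma norm_one_sub_le (x : ℂ) : ‖1 - x‖ ≤ 1 + ‖x‖ := by
  calc ‖1 - x‖ ≤ ‖(1 : ℂ)‖ + ‖x‖ := norm_sub_le _ _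
  _ = 1 + ‖x‖ := by simp

lemma one_sub_norm_le (x : ℂ) : 1 - ‖x‖ ≤ ‖1 - x‖ := by
  have := norm_sub_norm_le (1 : ℂ) x
  simpa using this

/-- Uniform upper bound on `‖poch a p n‖`. -/
lemma norm_poch_le {p : ℂ} (a : ℂ) (hp : ‖p‖ < 1) (n : ℕ) :
    ‖poch a p n‖ ≤ Real.exp (‖a‖ * (1 - ‖p‖)⁻¹) := by
  have hp0 : (0:ℝ) ≤ ‖p‖ := norm_nonneg _
  calc ‖poch a p n‖ = ∏ k ∈ Finset.range n, ‖1 - a * p ^ k‖ := norm_prod _ _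
    _ ≤ ∏ k ∈ Finset.range n, Real.exp (‖a‖ * ‖p‖ ^ k) := by
        refine Finset.prod_le_prod (fun k _ => norm_nonneg _) (fun k _ => ?_)
        refine le_trans (norm_one_sub_le _) ?_
        have : ‖a * p ^ k‖ = ‖a‖ * ‖p‖ ^ k := by simp [norm_mul, norm_pow]
        rw [this]
        have := Real.add_one_le_exp (‖a‖ * ‖p‖ ^ k)
        linarith
    _ = Real.exp (∑ k ∈ Finset.range n, ‖a‖ * ‖p‖ ^ k) := (Real.exp_sum _ _).symm
    _ ≤ Real.exp (‖a‖ * (1 - ‖p‖)⁻¹) := by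
        apply Real.exp_le_exp.2
        rw [← Finset.mul_sum]
        rcases le_or_gt ‖a‖ 0 with ha | ha
        · have ha0 : ‖a‖ = 0 := le_antisymm ha (norm_nonneg _)
          simp [ha0]
        · rw [mul_le_mul_iff_right₀ ha]
          have hs : Summable (fun k : ℕ => ‖p‖ ^ k) := summable_geometric_of_lt_one hp0 hp
          have := Summable.sum_le_tsum (Finset.range n) (fun k _ => by positivity) hs
          rwa [tsum_geometric_of_lt_one hp0 hp] at this

/-- Uniform positive lower bound on `∏_{k<n} (1 - r^{k+1})` for `0 ≤ r < 1`. -/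
lemma prod_one_sub_pow_lb {r : ℝ} (hr0 : 0 ≤ r) (hr : r < 1) :
    ∃ δ : ℝ, 0 < δ ∧ ∀ n : ℕ, δ ≤ ∏ k ∈ Finset.range n, (1 - r ^ (k + 1)) := by
  have hpow : ∀ k : ℕ, r ^ (k+1) < 1 := fun k => pow_lt_one₀ hr0 hr (Nat.succ_ne_zero k)
  have hfac : ∀ k : ℕ, 0 < 1 - r ^ (k+1) := fun k => by linarith [hpow k]
  -- choose N with tail sum ≤ 1/2
  have htend : Tendsto (fun N : ℕ => r ^ (N+1) * (1 - r)⁻¹) atTop (𝓝 0) := by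
    have h1 : Tendsto (fun N : ℕ => r ^ N) atTop (𝓝 0) :=
      tendsto_pow_atTop_nhds_zero_of_lt_one hr0 hr
    have h2 : Tendsto (fun N : ℕ => r ^ (N+1)) atTop (𝓝 0) := by
      exact h1.comp (tendsto_add_atTop_nat 1)
    simpa using h2.mul_const _
  obtain ⟨N, hN⟩ := (htend.eventually (eventually_le_nhds (by norm_num : (0:ℝ) < 1/2))).exists
  set P : ℝ := ∏ k ∈ Finset.range N, (1 - r ^ (k + 1)) with hP
  have hPpos : 0 < P := Finset.prod_pos fun k _ => hfac k
  refine ⟨P * (1/2), by positivity, fun n => ?_⟩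
  rcases le_or_gt n N with hn | hn
  · have h1 : P ≤ ∏ k ∈ Finset.range n, (1 - r ^ (k + 1)) := by
      rw [hP, ← Nat.add_sub_cancel' hn, Finset.prod_range_add]
      have hle : ∏ x ∈ Finset.range (N - n), (1 - r ^ (n + x + 1)) ≤ 1 := by
        apply Finset.prod_le_one (fun k _ => le_of_lt (hfac _)) (fun k _ => by linarith [pow_nonneg hr0 (n + k + 1)])
      calc (∏ k ∈ Finset.range n, (1 - r ^ (k+1))) * ∏ x ∈ Finset.range (N - n), (1 - r ^ (n + x + 1))
          ≤ (∏ k ∈ Finset.range n, (1 - r ^ (k+1))) * 1 := by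
            apply mul_le_mul_of_nonneg_left hle (le_of_lt (Finset.prod_pos fun k _ => hfac k))
        _ = _ := mul_one _
    nlinarith [Finset.prod_pos (fun k (_ : k ∈ Finset.range n) => hfac k)]
  · -- n > N : split product
    obtain ⟨d, rfl⟩ : ∃ d, n = N + d := ⟨n - N, by omega⟩
    rw [Finset.prod_range_add, ← hP]
    have htail : (1:ℝ)/2 ≤ ∏ x ∈ Finset.range d, (1 - r ^ (N + x + 1)) := by
      have key : ∀ m : ℕ, 1 - (∑ x ∈ Finset.range m, r ^ (N + x + 1)) ≤
          ∏ x ∈ Finset.range m, (1 - r ^ (N + x + 1)) := by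
        intro m
        induction m with
        | zero => simp
        | succ m ih =>
          rw [Finset.prod_range_succ, Finset.sum_range_succ]
          have h1 : 0 ≤ 1 - r ^ (N + m + 1) := le_of_lt (hfac _)
          have h2 : 0 ≤ r ^ (N + m + 1) := pow_nonneg hr0 _
          have h3 : (∏ x ∈ Finset.range m, (1 - r ^ (N + x + 1))) ≤ 1 :=
            Finset.prod_le_one (fun k _ => le_of_lt (hfac _))
              (fun k _ => by linarith [pow_nonneg hr0 (N + k + 1)])
          nlinarith
      have hsum : (∑ x ∈ Finset.range d, r ^ (N + x + 1)) ≤ r ^ (N+1) * (1 - r)⁻¹ := by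
        have he : ∀ x ∈ Finset.range d, r ^ (N + x + 1) = r ^ (N+1) * r ^ x := by
          intro x _; ring
        rw [Finset.sum_congr rfl he, ← Finset.mul_sum]
        have hs : Summable (fun k : ℕ => r ^ k) := summable_geometric_of_lt_one hr0 hr
        have h4 := Summable.sum_le_tsum (Finset.range d) (fun k _ => by positivity) hs
        rw [tsum_geometric_of_lt_one hr0 hr] at h4
        have h5 : (0:ℝ) ≤ r ^ (N+1) := by positivity
        exact mul_le_mul_of_nonneg_left h4 h5
      have hk := key d
      linarith
    have := mul_le_mul_of_nonneg_left htail (le_of_lt hPpos)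
    linarith

/-- lower bound on the norm of `qpoch`. -/
lemma norm_qpoch_lb {x : ℂ} (hx : ‖x‖ < 1) :
    ∃ δ : ℝ, 0 < δ ∧ ∀ n : ℕ, δ ≤ ‖qpoch x n‖ := by
  obtain ⟨δ, hδ, h⟩ := prod_one_sub_pow_lb (norm_nonneg x) hx
  refine ⟨δ, hδ, fun n => le_trans (h n) ?_⟩
  rw [qpoch, norm_prod]
  refine Finset.prod_le_prod (fun k _ => ?_) (fun k _ => ?_)
  · have : ‖x‖ ^ (k+1) < 1 := pow_lt_one₀ (norm_nonneg _) hx (Nat.succ_ne_zero k)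
    linarith
  · refine le_trans ?_ (one_sub_norm_le _)
    rw [norm_pow]


/-- Summability of logs of the factors of `qpochInf`. -/
lemma summable_log_factors {x p : ℂ} (hx : ‖x‖ < 1) (hp : ‖p‖ < 1) :
    Summable fun k : ℕ => Complex.log (1 - x * p ^ k) := by
  have hb : ∀ k : ℕ, ‖x * p ^ k‖ < 1 := by
    intro k
    rw [norm_mul, norm_pow]
    calc ‖x‖ * ‖p‖ ^ k ≤ ‖x‖ * 1 := by
          apply mul_le_mul_of_nonneg_left _ (norm_nonneg _)
          exact pow_le_one₀ (norm_nonneg _) (le_of_lt hp)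
      _ = ‖x‖ := mul_one _
      _ < 1 := hx
  -- compare with geometric series
  have hgeom : Summable (fun k : ℕ => (2 * ‖x‖) * ‖p‖ ^ k) :=
    (summable_geometric_of_lt_one (norm_nonneg _) hp).mul_left _
  apply Summable.of_norm_bounded_eventually hgeom
  have hev : ∀ᶠ k : ℕ in Filter.cofinite, ‖x‖ * ‖p‖ ^ k ≤ 1/2 := by
    rw [Nat.cofinite_eq_atTop]
    have ht : Tendsto (fun k : ℕ => ‖x‖ * ‖p‖ ^ k) atTop (𝓝 0) := by
      simpa using (tendsto_pow_atTop_nhds_zero_of_lt_one (norm_nonneg p) hp).const_mul ‖x‖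
    exact ht.eventually (eventually_le_nhds (by norm_num : (0:ℝ) < 1/2))
  filter_upwards [hev] with k hk
  have h1 : ‖-(x * p ^ k)‖ ≤ 1/2 := by
    rw [norm_neg, norm_mul, norm_pow]; exact hk
  have := Complex.norm_log_one_add_half_le_self h1
  have he : (1 : ℂ) + -(x * p ^ k) = 1 - x * p ^ k := by ring
  rw [he] at this
  calc ‖Complex.log (1 - x * p ^ k)‖ ≤ 3/2 * ‖-(x * p ^ k)‖ := this
    _ ≤ 2 * ‖x‖ * ‖p‖ ^ k := by
        rw [norm_neg, norm_mul, norm_pow]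
        nlinarith [norm_nonneg x, pow_nonneg (norm_nonneg p) k]

lemma factor_ne_zero {x p : ℂ} (hx : ‖x‖ < 1) (hp : ‖p‖ < 1) (k : ℕ) :
    (1 : ℂ) - x * p ^ k ≠ 0 := by
  intro h
  have h1 : x * p ^ k = 1 := by linear_combination -h
  have : ‖x * p ^ k‖ < 1 := by
    rw [norm_mul, norm_pow]
    calc ‖x‖ * ‖p‖ ^ k ≤ ‖x‖ * 1 :=
        mul_le_mul_of_nonneg_left (pow_le_one₀ (norm_nonneg _) (le_of_lt hp)) (norm_nonneg _)
      _ = ‖x‖ := mul_one _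
      _ < 1 := hx
  rw [h1] at this; simp at this

lemma hasProd_qpochInf {x p : ℂ} (hx : ‖x‖ < 1) (hp : ‖p‖ < 1) :
    HasProd (fun k : ℕ => 1 - x * p ^ k) (qpochInf x p) := by
  have := Complex.hasProd_of_hasSum_log (fun k => factor_ne_zero hx hp k)
    (summable_log_factors hx hp).hasSum
  rw [Complex.cexp_tsum_eq_tprod (fun k => factor_ne_zero hx hp k)
    (summable_log_factors hx hp)] at this
  exact this

lemma tendsto_qpochInf {x p : ℂ} (hx : ‖x‖ < 1) (hp : ‖p‖ < 1) :
    Tendsto (fun N : ℕ => ∏ k ∈ Finset.range N, (1 - x * p ^ k)) atTop (𝓝 (qpochInf x p)) :=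
  (hasProd_qpochInf hx hp).tendsto_prod_nat

lemma qpochInf_ne_zero {x p : ℂ} (hx : ‖x‖ < 1) (hp : ‖p‖ < 1) :
    qpochInf x p ≠ 0 := by
  have h2 : cexp (∑' k : ℕ, Complex.log (1 - x * p ^ k)) = ∏' k : ℕ, (1 - x * p ^ k) :=
    Complex.cexp_tsum_eq_tprod (fun k => factor_ne_zero hx hp k) (summable_log_factors hx hp)
  rw [qpochInf, ← h2]
  exact Complex.exp_ne_zero _


lemma qpoch_eq_poch (x : ℂ) (n : ℕ) : qpoch x n = poch x x n := by
  unfold qpoch poch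
  exact Finset.prod_congr rfl fun k _ => by rw [pow_succ']

lemma poch_pp_ne_zero {p : ℂ} (hp : ‖p‖ < 1) (n : ℕ) : poch p p n ≠ 0 := by
  apply poch_ne_zero
  intro k
  have : ‖p‖ * ‖p‖ ^ k = ‖p‖ ^ (k+1) := by ring
  rw [this]
  exact pow_lt_one₀ (norm_nonneg _) hp (Nat.succ_ne_zero k)

/-- A uniform bound on the coefficients `(a;p)_n/(p;p)_n`. -/
lemma qcoef_bound {a p : ℂ} (hp : ‖p‖ < 1) :
    ∃ C : ℝ, 0 ≤ C ∧ ∀ n : ℕ, ‖poch a p n / poch p p n‖ ≤ C := by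
  obtain ⟨δ, hδ, hlb⟩ := norm_qpoch_lb (x := p) hp
  refine ⟨Real.exp (‖a‖ * (1 - ‖p‖)⁻¹) * δ⁻¹, by positivity, fun n => ?_⟩
  rw [norm_div]
  have h1 := norm_poch_le a hp n
  have h2 : δ ≤ ‖poch p p n‖ := by rw [← qpoch_eq_poch]; exact hlb n
  have h3 : 0 < ‖poch p p n‖ := lt_of_lt_of_le hδ h2
  rw [div_le_iff₀ h3]
  calc ‖poch a p n‖ ≤ Real.exp (‖a‖ * (1 - ‖p‖)⁻¹) := h1
    _ = Real.exp (‖a‖ * (1 - ‖p‖)⁻¹) * δ⁻¹ * δ := by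
        field_simp
    _ ≤ Real.exp (‖a‖ * (1 - ‖p‖)⁻¹) * δ⁻¹ * ‖poch p p n‖ := by
        apply mul_le_mul_of_nonneg_left h2 (by positivity)

/-- The analytic q-binomial theorem. -/
lemma master {a p t : ℂ} (ha : ‖a‖ < 1) (hp : ‖p‖ < 1) (ht : ‖t‖ < 1) :
    ∑' n : ℕ, poch a p n / poch p p n * t ^ n = qpochInf (a*t) p / qpochInf t p := by
  set c : ℕ → ℂ := fun n => poch a p n / poch p p n with hc
  obtain ⟨C, hC0, hC⟩ := qcoef_bound (a := a) (p := p) hp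
  have hcnorm : ∀ (s : ℂ) (n : ℕ), ‖c n * s ^ n‖ ≤ C * ‖s‖ ^ n := by
    intro s n
    rw [norm_mul, norm_pow]
    exact mul_le_mul_of_nonneg_right (hC n) (by positivity)
  have hsum : ∀ s : ℂ, ‖s‖ < 1 → Summable (fun n => c n * s ^ n) := by
    intro s hs
    exact Summable.of_norm_bounded
      (((summable_geometric_of_lt_one (norm_nonneg _) hs)).mul_left C) (hcnorm s)
  set f : ℂ → ℂ := fun s => ∑' n : ℕ, c n * s ^ n with hf
  have hps : ∀ s : ℂ, ‖s‖ < 1 → ‖p * s‖ < 1 := by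
    intro s hs
    rw [norm_mul]
    nlinarith [norm_nonneg p, norm_nonneg s]
  have hrec : ∀ n : ℕ, c (n+1) * (1 - p * p ^ n) = c n * (1 - a * p ^ n) := by
    intro n
    rw [hc]
    simp only
    rw [poch_succ, poch_succ]
    have h1 := poch_pp_ne_zero hp n
    have h2 := poch_pp_ne_zero hp (n+1)
    rw [poch_succ] at h2
    have h3 : (1 - p * p ^ n) ≠ 0 := right_ne_zero_of_mul h2
    rw [div_mul_eq_mul_div, mul_div_mul_right _ _ h3]
    ring
  have funeq : ∀ s : ℂ, ‖s‖ < 1 → (1 - s) * f s = (1 - a*s) * f (p*s) := by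
    intro s hs
    have h1 := hsum s hs
    have h2 := hsum (p*s) (hps s hs)
    have key : f s - f (p*s) = s * f s - (a*s) * f (p*s) := by
      have e1 : f s - f (p*s) = ∑' n : ℕ, (c n * s ^ n - c n * (p*s) ^ n) :=
        (Summable.tsum_sub h1 h2).symm
      have e2 : s * f s - (a*s) * f (p*s)
          = ∑' n : ℕ, (s * (c n * s ^ n) - (a*s) * (c n * (p*s) ^ n)) := by
        rw [Summable.tsum_sub (h1.mul_left s) (h2.mul_left (a*s)), tsum_mul_left, tsum_mul_left]
      rw [e1, e2]
      rw [Summable.tsum_eq_zero_add (h1.sub h2)]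
      simp only [pow_zero, mul_one, sub_self, zero_add]
      apply tsum_congr
      intro n
      have h := hrec n
      simp only [mul_pow, pow_succ]
      linear_combination (s ^ n * s) * h
    linear_combination key
  have iter : ∀ N : ℕ, (∏ k ∈ Finset.range N, (1 - t * p ^ k)) * f t
      = (∏ k ∈ Finset.range N, (1 - a * t * p ^ k)) * f (p ^ N * t) := by
    intro N
    induction N with
    | zero => simp
    | succ N ih =>
      have hsN : ‖p ^ N * t‖ < 1 := by
        rw [norm_mul, norm_pow]
        have h1 : ‖p‖ ^ N ≤ 1 := pow_le_one₀ (norm_nonneg _) (le_of_lt hp)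
        nlinarith [norm_nonneg t, pow_nonneg (norm_nonneg p) N]
      have h := funeq (p ^ N * t) hsN
      have harg : p * (p ^ N * t) = p ^ (N+1) * t := by ring
      rw [harg] at h
      rw [Finset.prod_range_succ, Finset.prod_range_succ]
      linear_combination (1 - t * p ^ N) * ih + (∏ k ∈ Finset.range N, (1 - a * t * p ^ k)) * h
  -- limits
  have hat : ‖a * t‖ < 1 := by
    rw [norm_mul]; nlinarith [norm_nonneg a, norm_nonneg t]
  have hP := tendsto_qpochInf ht hp
  have hQ := tendsto_qpochInf hat hp
  have hf1 : Tendsto (fun N : ℕ => f (p ^ N * t)) atTop (𝓝 1) := by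
    have hbound : ∀ N : ℕ, ‖f (p ^ N * t) - 1‖ ≤ (C * ‖t‖ * (1 - ‖t‖)⁻¹) * ‖p‖ ^ N := by
      intro N
      set s : ℂ := p ^ N * t with hsdef
      have hsN : ‖s‖ ≤ ‖p‖ ^ N * ‖t‖ := by rw [hsdef, norm_mul, norm_pow]
      have hs1 : ‖s‖ < 1 := by
        have h1 : ‖p‖ ^ N ≤ 1 := pow_le_one₀ (norm_nonneg _) (le_of_lt hp)
        nlinarith [norm_nonneg t, pow_nonneg (norm_nonneg p) N, norm_nonneg s]
      have hsle : ‖s‖ ≤ ‖t‖ := by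
        have h1 : ‖p‖ ^ N ≤ 1 := pow_le_one₀ (norm_nonneg _) (le_of_lt hp)
        nlinarith [norm_nonneg t, pow_nonneg (norm_nonneg p) N]
      have h1 := hsum s hs1
      have hc0 : c 0 = 1 := by simp [hc, poch]
      have e1 : f s - 1 = ∑' n : ℕ, c (n+1) * s ^ (n+1) := by
        rw [hf]
        simp only
        rw [Summable.tsum_eq_zero_add h1, hc0]
        simp
      rw [e1]
      have hsummn : Summable (fun n : ℕ => ‖c (n+1) * s ^ (n+1)‖) := by
        apply Summable.of_nonneg_of_le (fun n => norm_nonneg _)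
          (fun n => hcnorm s (n+1))
        have : Summable (fun n : ℕ => (C * ‖s‖) * ‖s‖ ^ n) :=
          ((summable_geometric_of_lt_one (norm_nonneg _) hs1)).mul_left _
        apply this.congr
        intro n; rw [pow_succ]; ring
      calc ‖∑' n : ℕ, c (n+1) * s ^ (n+1)‖ ≤ ∑' n : ℕ, ‖c (n+1) * s ^ (n+1)‖ :=
            norm_tsum_le_tsum_norm hsummn
        _ ≤ ∑' n : ℕ, (C * ‖s‖) * ‖s‖ ^ n := by
            apply Summable.tsum_le_tsum _ hsummn
              (((summable_geometric_of_lt_one (norm_nonneg _) hs1)).mul_left _)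
            intro n
            calc ‖c (n+1) * s ^ (n+1)‖ ≤ C * ‖s‖ ^ (n+1) := hcnorm s (n+1)
              _ = (C * ‖s‖) * ‖s‖ ^ n := by rw [pow_succ]; ring
        _ = (C * ‖s‖) * (1 - ‖s‖)⁻¹ := by
            rw [tsum_mul_left, tsum_geometric_of_lt_one (norm_nonneg _) hs1]
        _ ≤ (C * ‖t‖ * (1 - ‖t‖)⁻¹) * ‖p‖ ^ N := by
            have hi1 : (1 - ‖s‖)⁻¹ ≤ (1 - ‖t‖)⁻¹ := by
              apply inv_anti₀ (by linarith) (by linarith)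
            have hs0 : (0:ℝ) ≤ (1 - ‖s‖)⁻¹ := by
              rw [inv_nonneg]; linarith
            have e2 : C * ‖s‖ * (1-‖s‖)⁻¹ ≤ C * (‖p‖^N * ‖t‖) * (1-‖t‖)⁻¹ := by
              apply mul_le_mul
              · exact mul_le_mul_of_nonneg_left hsN hC0
              · exact hi1
              · exact hs0
              · positivity
            calc C * ‖s‖ * (1-‖s‖)⁻¹ ≤ C * (‖p‖^N * ‖t‖) * (1-‖t‖)⁻¹ := e2
              _ = (C * ‖t‖ * (1 - ‖t‖)⁻¹) * ‖p‖ ^ N := by ring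
    have h0 : Tendsto (fun N : ℕ => (C * ‖t‖ * (1 - ‖t‖)⁻¹) * ‖p‖ ^ N) atTop (𝓝 0) := by
      simpa using (tendsto_pow_atTop_nhds_zero_of_lt_one (norm_nonneg p) hp).const_mul
        (C * ‖t‖ * (1 - ‖t‖)⁻¹)
    have h2 : Tendsto (fun N : ℕ => f (p ^ N * t) - 1) atTop (𝓝 0) :=
      squeeze_zero_norm hbound h0
    have := h2.add_const 1
    simpa using this
  have hlim1 : Tendsto (fun N : ℕ => (∏ k ∈ Finset.range N, (1 - t * p ^ k)) * f t)
      atTop (𝓝 (qpochInf t p * f t)) := hP.mul_const _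
  have hlim2 : Tendsto (fun N : ℕ => (∏ k ∈ Finset.range N, (1 - a * t * p ^ k)) * f (p ^ N * t))
      atTop (𝓝 (qpochInf (a*t) p * 1)) := by
    exact hQ.mul hf1
  have heq : qpochInf t p * f t = qpochInf (a*t) p * 1 := by
    apply tendsto_nhds_unique _ hlim2
    apply hlim1.congr
    intro N
    exact iter N
  have hne := qpochInf_ne_zero ht hp
  rw [eq_div_iff hne]
  have : f t = ∑' n : ℕ, poch a p n / poch p p n * t ^ n := rfl
  rw [← this]
  linear_combination heq


lemma one_sub_qpow_ne_zero {q : ℂ} (hq : ‖q‖ < 1) (n : ℕ) : (1:ℂ) - q ^ (n+1) ≠ 0 := by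
  intro h
  have h1 : q ^ (n+1) = 1 := by linear_combination -h
  have : ‖q ^ (n+1)‖ < 1 := by
    rw [norm_pow]
    exact pow_lt_one₀ (norm_nonneg _) hq (Nat.succ_ne_zero n)
  rw [h1] at this; simp at this

lemma qpoch_ne_zero {q : ℂ} (hq : ‖q‖ < 1) (n : ℕ) : qpoch q n ≠ 0 := by
  rw [qpoch_eq_poch]; exact poch_pp_ne_zero hq n

lemma qpoch_succ (q : ℂ) (n : ℕ) :
    qpoch q (n + 1) = qpoch q n * (1 - q ^ (n+1)) := Finset.prod_range_succ _ _

/-- integer exponent arithmetic -/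
lemma int_e1 (I J : ℤ) :
    ((I+1) * (I+1+1)) / 2 - (I+1) * J = (((I+1) * (I+1+1)) / 2 - (I+1) * (J+1)) + (I+1) := by
  have h : (I+1)*(J+1) = (I+1)*J + (I+1) := by ring
  omega

lemma int_e2 (I J : ℤ) :
    (-J) + ((I*(I+1))/2 - I*J) = ((I+1)*(I+1+1))/2 - (I+1)*(J+1) := by
  obtain ⟨k, hk⟩ := Int.even_mul_succ_self I
  have h1 : (I+1)*(I+1+1) = I*(I+1) + 2*(I+1) := by ring
  have h2 : (I+1)*(J+1) = I*J + I + J + 1 := by ring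
  omega

lemma int_e3 (J : ℤ) :
    (-J) + ((J*(J+1))/2 - J*J) = ((J+1)*(J+1+1))/2 - (J+1)*(J+1) := by
  obtain ⟨k, hk⟩ := Int.even_mul_succ_self J
  have h1 : (J+1)*(J+1+1) = J*(J+1) + 2*(J+1) := by ring
  have h2 : (J+1)*(J+1) = J*J + 2*J + 1 := by ring
  omega

/-- q-Pascal step for `i < j`. -/
lemma qbinom_key1 {q : ℂ} (hq : ‖q‖ < 1) (hq0 : q ≠ 0) {j i : ℕ} (hi : i < j) :
    (-1:ℂ)^(i+1) * q ^ ((((i+1:ℕ):ℤ) * ((i+1:ℕ)+1)) / 2 - ((i+1:ℕ):ℤ) * ((j+1:ℕ):ℤ)) * qbinom q (j+1) (i+1)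
    = (-1:ℂ)^(i+1) * q ^ ((((i+1:ℕ):ℤ) * ((i+1:ℕ)+1)) / 2 - ((i+1:ℕ):ℤ) * (j:ℤ)) * qbinom q j (i+1)
      - q ^ (-(j:ℤ)) * ((-1:ℂ)^i * q ^ (((i:ℤ) * ((i:ℤ)+1)) / 2 - (i:ℤ) * (j:ℤ)) * qbinom q j i) := by
  obtain ⟨d, rfl⟩ := Nat.exists_eq_add_of_lt hi
  have hsub1 : i + d + 1 + 1 - (i + 1) = d + 1 := by omega
  have hsub2 : i + d + 1 - (i + 1) = d := by omega
  have hsub3 : i + d + 1 - i = d + 1 := by omega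
  simp only [qbinom, hsub1, hsub2, hsub3]
  set I : ℤ := (i:ℤ) with hI
  set J : ℤ := ((i+d+1:ℕ):ℤ) with hJ
  set E1 : ℤ := ((I+1) * (I+1+1)) / 2 - (I+1) * (J+1) with hE1
  -- the three zpow exponents
  have hcast1 : (((i+1:ℕ)):ℤ) = I + 1 := by push_cast [hI]; ring
  have hcast2 : (((i+1:ℕ)):ℤ) + 1 = I + 1 + 1 := by rw [hcast1]
  have hcast3 : (((i+d+1+1:ℕ)):ℤ) = J + 1 := by push_cast [hJ]; ring
  have hexp1 : ((((i+1:ℕ)):ℤ) * ((((i+1:ℕ)):ℤ)+1)) / 2 - (((i+1:ℕ)):ℤ) * (((i+d+1+1:ℕ)):ℤ) = E1 := by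
    rw [hcast1, hcast3, hE1]
  have hexp2 : ((((i+1:ℕ)):ℤ) * ((((i+1:ℕ)):ℤ)+1)) / 2 - (((i+1:ℕ)):ℤ) * J = E1 + (I+1) := by
    rw [hcast1, hE1]
    exact int_e1 I J
  have hexp3 : (-J) + ((I * (I+1)) / 2 - I * J) = E1 := by
    rw [hE1]
    exact int_e2 I J
  -- rewrite all zpow exponents
  have hz2 : q ^ (((((i+1:ℕ)):ℤ) * ((((i+1:ℕ)):ℤ)+1)) / 2 - (((i+1:ℕ)):ℤ) * J)
      = q ^ E1 * q ^ (i+1) := by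
    rw [hexp2, zpow_add₀ hq0, hI]
    norm_cast
  have hz3 : q ^ (-J) * q ^ ((I * (I+1)) / 2 - I * J) = q ^ E1 := by
    rw [← zpow_add₀ hq0, hexp3]
  -- reduce to the rational function identity
  rw [hexp1, hz2]
  have hgoal : q ^ (-J) * ((-1:ℂ)^i * q ^ ((I * (I+1)) / 2 - I * J) * (qpoch q (i+d+1) / (qpoch q (d+1) * qpoch q i)))
      = q ^ E1 * ((-1:ℂ)^i * (qpoch q (i+d+1) / (qpoch q (d+1) * qpoch q i))) := by
    rw [← hz3]; ring
  rw [hgoal]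
  have hP1 : qpoch q d ≠ 0 := qpoch_ne_zero hq _
  have hP2 : qpoch q i ≠ 0 := qpoch_ne_zero hq _
  have hP5 : qpoch q (i+d+1) ≠ 0 := qpoch_ne_zero hq _
  have hf1 : (1:ℂ) - q ^ (d+1) ≠ 0 := one_sub_qpow_ne_zero hq d
  have hf2 : (1:ℂ) - q ^ (i+1) ≠ 0 := one_sub_qpow_ne_zero hq i
  have hE1ne : (q:ℂ) ^ E1 ≠ 0 := zpow_ne_zero _ hq0
  have hs1 : qpoch q (i+d+1+1) = qpoch q (i+d+1) * (1 - q ^ (i+d+1+1)) := qpoch_succ q _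
  have hs2 : qpoch q (d+1) = qpoch q d * (1 - q ^ (d+1)) := qpoch_succ q _
  have hs3 : qpoch q (i+1) = qpoch q i * (1 - q ^ (i+1)) := qpoch_succ q _
  rw [hs1, hs2, hs3]
  field_simp
  ring

/-- q-Pascal step for the top coefficient. -/
lemma qbinom_key2 {q : ℂ} (hq : ‖q‖ < 1) (hq0 : q ≠ 0) (j : ℕ) :
    (-1:ℂ)^(j+1) * q ^ ((((j+1:ℕ):ℤ) * ((j+1:ℕ)+1)) / 2 - ((j+1:ℕ):ℤ) * ((j+1:ℕ):ℤ)) * qbinom q (j+1) (j+1)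
    = - (q ^ (-(j:ℤ)) * ((-1:ℂ)^j * q ^ (((j:ℤ) * ((j:ℤ)+1)) / 2 - (j:ℤ) * (j:ℤ)) * qbinom q j j)) := by
  have hb1 : qbinom q (j+1) (j+1) = 1 := by
    simp [qbinom, Nat.sub_self, qpoch]
    exact qpoch_ne_zero hq (j+1)
  have hb2 : qbinom q j j = 1 := by
    simp [qbinom, Nat.sub_self, qpoch]
    exact qpoch_ne_zero hq j
  rw [hb1, hb2]
  have hcast1 : (((j+1:ℕ)):ℤ) = (j:ℤ) + 1 := by push_cast; ring
  rw [hcast1]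
  have hexp : (-(j:ℤ)) + (((j:ℤ) * ((j:ℤ)+1)) / 2 - (j:ℤ) * (j:ℤ))
      = (((j:ℤ)+1) * (((j:ℤ)+1)+1)) / 2 - ((j:ℤ)+1) * ((j:ℤ)+1) := int_e3 (j:ℤ)
  have hz : q ^ ((((j:ℤ)+1) * (((j:ℤ)+1)+1)) / 2 - ((j:ℤ)+1) * ((j:ℤ)+1))
      = q ^ (-(j:ℤ)) * q ^ (((j:ℤ) * ((j:ℤ)+1)) / 2 - (j:ℤ) * (j:ℤ)) := by
    rw [← zpow_add₀ hq0, hexp]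
  rw [mul_one, mul_one, hz]
  ring

lemma qbinom_key3 {q : ℂ} (hq : ‖q‖ < 1) (j : ℕ) : qbinom q j 0 = 1 := by
  simp [qbinom, qpoch]
  exact qpoch_ne_zero hq j


/-- finite q-binomial expansion of `∏_{t<j} (1 - q^{-t} x)`. -/
lemma qbinom_expand {q : ℂ} (hq : ‖q‖ < 1) (hq0 : q ≠ 0) (j : ℕ) (x : ℂ) :
    ∏ t ∈ Finset.range j, (1 - q ^ (-(t:ℤ)) * x)
    = ∑ i ∈ Finset.range (j+1),
        (-1:ℂ)^i * q ^ (((i:ℤ) * ((i:ℤ)+1)) / 2 - (i:ℤ) * (j:ℤ)) * qbinom q j i * x ^ i := by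
  induction j with
  | zero =>
    simp only [Finset.prod_range_zero, Finset.range_one, Finset.sum_singleton]
    have h := qbinom_key3 hq 0
    norm_num [h]
  | succ j ih =>
    rw [Finset.prod_range_succ, ih]
    set c : ℕ → ℕ → ℂ := fun J i =>
      (-1:ℂ)^i * q ^ (((i:ℤ) * ((i:ℤ)+1)) / 2 - (i:ℤ) * (J:ℤ)) * qbinom q J i with hcdef
    show (∑ i ∈ Finset.range (j+1), c j i * x ^ i) * (1 - q ^ (-(j:ℤ)) * x)
        = ∑ i ∈ Finset.range (j+1+1), c (j+1) i * x ^ i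
    have key1 : ∀ i ∈ Finset.range j, c (j+1) (i+1) = c j (i+1) - q ^ (-(j:ℤ)) * c j i := by
      intro i hi
      have h := qbinom_key1 hq hq0 (Finset.mem_range.1 hi)
      rw [hcdef]
      push_cast at h ⊢
      convert h using 2 <;> push_cast <;> ring_nf
    have key2 : c (j+1) (j+1) = - (q ^ (-(j:ℤ)) * c j j) := by
      have h := qbinom_key2 hq hq0 j
      rw [hcdef]
      push_cast at h ⊢
      convert h using 2 <;> push_cast <;> ring_nf
    have key30 : c j 0 = 1 := by
      rw [hcdef]
      have h := qbinom_key3 hq j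
      norm_num [h]
    have key31 : c (j+1) 0 = 1 := by
      rw [hcdef]
      have h := qbinom_key3 hq (j+1)
      norm_num [h]
    have e1 : (∑ i ∈ Finset.range (j+1), c j i * x ^ i)
        = (∑ i ∈ Finset.range j, c j (i+1) * x ^ (i+1)) + c j 0 := by
      rw [Finset.sum_range_succ' (fun i => c j i * x ^ i) j]
      simp
    have e2 : x * (∑ i ∈ Finset.range (j+1), c j i * x ^ i)
        = (∑ i ∈ Finset.range j, c j i * x ^ (i+1)) + c j j * x ^ (j+1) := by
      rw [Finset.mul_sum, Finset.sum_range_succ]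
      congr 1
      · apply Finset.sum_congr rfl; intro i _; ring
      · ring
    have e3 : ∑ i ∈ Finset.range (j+1+1), c (j+1) i * x ^ i
        = (∑ i ∈ Finset.range j, c (j+1) (i+1) * x ^ (i+1))
          + c (j+1) (j+1) * x ^ (j+1) + c (j+1) 0 := by
      rw [Finset.sum_range_succ' (fun i => c (j+1) i * x ^ i) (j+1), Finset.sum_range_succ]
      simp
    have e4 : (∑ i ∈ Finset.range j, c (j+1) (i+1) * x ^ (i+1))
        = (∑ i ∈ Finset.range j, c j (i+1) * x ^ (i+1))
          - q ^ (-(j:ℤ)) * (∑ i ∈ Finset.range j, c j i * x ^ (i+1)) := by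
      rw [Finset.mul_sum, ← Finset.sum_sub_distrib]
      apply Finset.sum_congr rfl
      intro i hi
      rw [key1 i hi]; ring
    rw [e3, e4, key2, key31]
    have lhs : (∑ i ∈ Finset.range (j+1), c j i * x ^ i) * (1 - q ^ (-(j:ℤ)) * x)
        = ((∑ i ∈ Finset.range j, c j (i+1) * x ^ (i+1)) + c j 0)
          - q ^ (-(j:ℤ)) * ((∑ i ∈ Finset.range j, c j i * x ^ (i+1)) + c j j * x ^ (j+1)) := by
      rw [← e1, ← e2]; ring
    rw [lhs, key30]
    ring

lemma summable_geom_bound (g : ℕ → ℂ) {C s : ℝ} (hs0 : 0 ≤ s) (hs : s < 1)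
    (h : ∀ n, ‖g n‖ ≤ C * s ^ n) : Summable g :=
  Summable.of_norm_bounded ((summable_geometric_of_lt_one hs0 hs).mul_left C) h

lemma kk_iter (q : ℂ) (m : ℕ) (f : ℕ → ℂ) (n : ℕ) :
    (kk q)^[m] f n = q ^ (m * n) * f n := by
  induction m generalizing f with
  | zero => simp
  | succ m ih =>
    rw [Function.iterate_succ_apply']
    show q ^ n * ((kk q)^[m] f n) = _
    rw [ih]
    rw [← mul_assoc, ← pow_add]
    congr 2
    ring

lemma aM_iter (q : ℂ) (j : ℕ) (f : ℕ → ℂ) (n : ℕ) :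
    (aM q)^[j] f n = (∏ t ∈ Finset.range j, (1 - q ^ (2 * (n + t + 1)))) * f (n + j) := by
  induction j generalizing f n with
  | zero => simp
  | succ j ih =>
    rw [Function.iterate_succ_apply]
    rw [ih (aM q f) n]
    show (∏ t ∈ Finset.range j, (1 - q ^ (2 * (n + t + 1)))) *
        ((1 - q ^ (2 * (n + j + 1))) * f (n + j + 1)) = _
    rw [Finset.prod_range_succ]
    have : n + (j + 1) = n + j + 1 := by omega
    rw [this]
    ring

lemma qpoch_sq_split (q : ℂ) (n : ℕ) :
    qpoch (q^2) n = poch q q n * poch (-q) q n := by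
  induction n with
  | zero => simp [qpoch, poch]
  | succ n ih =>
    rw [qpoch_succ, poch_succ, poch_succ, ih]
    ring

lemma poch_negq_even_split (q : ℂ) (k : ℕ) :
    poch (-q) q (2*k) = poch (-q) (q^2) k * poch (-(q^2)) (q^2) k := by
  induction k with
  | zero => simp [poch]
  | succ k ih =>
    have h : 2*(k+1) = (2*k+1)+1 := by ring
    rw [h, poch_succ, poch_succ, poch_succ, poch_succ, ih]
    ring

lemma qpoch_q4_split (q : ℂ) (k : ℕ) :
    qpoch (q^4) k = poch (q^2) (q^2) k * poch (-(q^2)) (q^2) k := by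
  induction k with
  | zero => simp [qpoch, poch]
  | succ k ih =>
    rw [qpoch_succ, poch_succ, poch_succ, ih]
    ring

lemma eta1_qpoch {q : ℂ} (hq : ‖q‖ < 1) (l : ℕ) :
    eta1 q l * qpoch (q^2) l = poch (-q) q l := by
  rw [eta1, qpoch_sq_split, ← qpoch_eq_poch]
  field_simp [qpoch_ne_zero hq l]

lemma poch_negq2_ne_zero {q : ℂ} (hq : ‖q‖ < 1) (k : ℕ) : poch (-(q^2)) (q^2) k ≠ 0 := by
  apply poch_ne_zero
  intro k'
  have h1 : ‖-(q^2)‖ = ‖q‖^2 := by rw [norm_neg, norm_pow]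
  have h2 : ‖q^2‖ = ‖q‖^2 := by rw [norm_pow]
  rw [h1, h2]
  have h3 : ‖q‖^2 < 1 := by nlinarith [norm_nonneg q]
  have h4 : (‖q‖^2)^k' ≤ 1 := pow_le_one₀ (by positivity) (le_of_lt h3)
  nlinarith [pow_nonneg (sq_nonneg ‖q‖) k']

/-- evaluation of `⟨η₁| x^h |η₂⟩`. -/
lemma Slem {q x : ℂ} (hq : ‖q‖ < 1) (hq0 : q ≠ 0) (hx : ‖x‖ < 1) :
    ∑' n : ℕ, poch (-q) q n * (x ^ n * eta2 q n)
    = qpochInf (-q * x^2) (q^2) / qpochInf (x^2) (q^2) := by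
  have hq2 : ‖q^2‖ < 1 := by
    rw [norm_pow]; nlinarith [norm_nonneg q]
  have hnq : ‖-q‖ < 1 := by rw [norm_neg]; exact hq
  have hx2 : ‖x^2‖ < 1 := by
    rw [norm_pow]; nlinarith [norm_nonneg x]
  -- restrict to even indices
  have hinj : Function.Injective (fun k : ℕ => 2*k) := by
    intro a b h
    simp only at h
    omega
  have hsupp : Function.support (fun n : ℕ => poch (-q) q n * (x ^ n * eta2 q n))
      ⊆ Set.range (fun k : ℕ => 2*k) := by
    intro n hn
    simp only [Function.mem_support] at hn
    rcases Nat.even_or_odd n with he | ho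
    · obtain ⟨k, hk⟩ := he
      exact ⟨k, by simp only; omega⟩
    · exfalso
      apply hn
      have h0 : eta2 q n = 0 := by
        simp only [eta2, Nat.not_even_iff_odd.2 ho, if_false]
      rw [h0]; ring
  rw [← Function.Injective.tsum_eq hinj hsupp]
  have hterm : ∀ k : ℕ, poch (-q) q (2*k) * (x ^ (2*k) * eta2 q (2*k))
      = poch (-q) (q^2) k / poch (q^2) (q^2) k * (x^2) ^ k := by
    intro k
    have he : eta2 q (2*k) = (qpoch (q^4) k)⁻¹ := by
      have h2 : (2*k)/2 = k := by omega
      simp [eta2, h2, even_two_mul]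
    rw [he, poch_negq_even_split, qpoch_q4_split]
    have h1 : poch (-(q^2)) (q^2) k ≠ 0 := poch_negq2_ne_zero hq k
    have h2 : poch (q^2) (q^2) k ≠ 0 := poch_pp_ne_zero hq2 k
    have h3 : x ^ (2*k) = (x^2)^k := by rw [pow_mul]
    rw [h3]
    field_simp
  have hstep : ∑' k : ℕ, poch (-q) q (2*k) * (x ^ (2*k) * eta2 q (2*k))
      = ∑' k : ℕ, poch (-q) (q^2) k / poch (q^2) (q^2) k * (x^2) ^ k := by
    exact tsum_congr hterm
  have hmaster := master (a := -q) (p := q^2) (t := x^2) hnq hq2 hx2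
  calc ∑' k : ℕ, (fun n : ℕ => poch (-q) q n * (x ^ n * eta2 q n)) (2*k)
      = ∑' k : ℕ, poch (-q) (q^2) k / poch (q^2) (q^2) k * (x^2) ^ k := hstep
    _ = qpochInf (-q * x^2) (q^2) / qpochInf (x^2) (q^2) := hmaster


/-- `⟨η₁| z^h (a⁻)^j k^m w^h |η₂⟩ = z^{-j} Σ_{i=0}^j (-1)^i q^{i(i+1-2j)/2}
binom(j,i)_q (-q^{2i+2m+1}z²w²;q²)_∞ / (q^{2i+2m}z²w²;q²)_∞`;
the pairing is `⟨m|m'⟩ = δ_{m,m'}(q²;q²)_m`. -/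
theorem stmt8 (q z w : ℂ) (j m : ℕ) (hq : ‖q‖ < 1) (hq0 : q ≠ 0) (hz : z ≠ 0)
    (hzw : ‖z * w‖ < 1) :
    ∑' l : ℕ, eta1 q l * qpoch (q ^ 2) l *
        (zh z ((aM q)^[j] ((kk q)^[m] (zh w (eta2 q))))) l
    = z ^ (-(j : ℤ)) * ∑ i ∈ Finset.range (j + 1),
        (-1 : ℂ) ^ i * q ^ (((i : ℤ) * (i + 1)) / 2 - (i : ℤ) * j) * qbinom q j i *
          (qpochInf (-(q ^ (2 * i + 2 * m + 1)) * z ^ 2 * w ^ 2) (q ^ 2) /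
            qpochInf (q ^ (2 * i + 2 * m) * z ^ 2 * w ^ 2) (q ^ 2)) := by

  have hq4 : ‖q^4‖ < 1 := by
    rw [norm_pow]
    have h0 := norm_nonneg q
    nlinarith [pow_nonneg h0 2, pow_nonneg h0 3]
  set F : ℕ → ℂ := fun n => z ^ (-(j:ℤ)) *
    ((∏ t ∈ Finset.range j, (1 - q ^ (-(t:ℤ)) * q ^ n)) *
      (poch (-q) q n * ((q^m * z * w) ^ n * eta2 q n))) with hF
  -- Step A : termwise identification
  have hterm : ∀ l : ℕ,
      eta1 q l * qpoch (q ^ 2) l *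
        (zh z ((aM q)^[j] ((kk q)^[m] (zh w (eta2 q))))) l = F (l + j) := by
    intro l
    have hzh : (zh z ((aM q)^[j] ((kk q)^[m] (zh w (eta2 q))))) l
        = z ^ l * (((aM q)^[j] ((kk q)^[m] (zh w (eta2 q)))) l) := rfl
    rw [hzh, aM_iter, kk_iter]
    have hzh2 : zh w (eta2 q) (l + j) = w ^ (l+j) * eta2 q (l+j) := rfl
    rw [hzh2]
    have hme : eta1 q l * qpoch (q^2) l = poch (-q) q l := eta1_qpoch hq l
    rw [hF]
    simp only
    have hA : (∏ t ∈ Finset.range j, (1 - q ^ (-(t:ℤ)) * q ^ (l+j)))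
        = ∏ t ∈ Finset.range j, (1 - q ^ (l + t + 1)) := by
      rw [← Finset.prod_range_reflect (fun t => 1 - q ^ (l + t + 1)) j]
      apply Finset.prod_congr rfl
      intro t ht
      have ht' : t < j := Finset.mem_range.1 ht
      congr 1
      rw [← zpow_natCast q (l+j), ← zpow_add₀ hq0, ← zpow_natCast q (l + (j-1-t) + 1)]
      congr 1
      omega
    have hB : poch (-q) q (l+j) = poch (-q) q l * ∏ t ∈ Finset.range j, (1 + q ^ (l + t + 1)) := by
      rw [poch_add]
      congr 1
      apply Finset.prod_congr rfl
      intro t _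
      ring
    have hC : (∏ t ∈ Finset.range j, (1 - q ^ (l + t + 1))) *
        (∏ t ∈ Finset.range j, (1 + q ^ (l + t + 1)))
        = ∏ t ∈ Finset.range j, (1 - q ^ (2 * (l + t + 1))) := by
      rw [← Finset.prod_mul_distrib]
      apply Finset.prod_congr rfl
      intro t _
      ring
    have hZ : z ^ (-(j:ℤ)) * z ^ (l+j) = z ^ l := by
      rw [← zpow_natCast z (l+j), ← zpow_add₀ hz, ← zpow_natCast z l]
      congr 1
      omega
    rw [hA, hB, ← hme, ← hC, ← hZ]
    ring
  -- Step B : summability data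
  obtain ⟨δ, hδ, hlb⟩ := norm_qpoch_lb hq4
  have hδinv : (0:ℝ) ≤ δ⁻¹ := inv_nonneg.2 hδ.le
  have heta2 : ∀ n : ℕ, ‖eta2 q n‖ ≤ δ⁻¹ := by
    intro n
    by_cases he : Even n
    · simp only [eta2, he, if_true]
      rw [norm_inv]
      exact inv_anti₀ hδ (hlb _)
    · simp only [eta2, he, if_false]
      simpa using hδinv
  set CA : ℝ := Real.exp (‖-q‖ * (1 - ‖q‖)⁻¹) with hCA
  have hCA0 : 0 ≤ CA := Real.exp_nonneg _
  have hpochb : ∀ n : ℕ, ‖poch (-q) q n‖ ≤ CA := fun n => norm_poch_le (-q) hq n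
  have hqpow1 : ∀ i : ℕ, ‖q ^ i‖ ≤ 1 := by
    intro i
    rw [norm_pow]
    exact pow_le_one₀ (norm_nonneg _) hq.le
  have hxnorm : ∀ i : ℕ, ‖q ^ i * z * w‖ ≤ ‖z * w‖ := by
    intro i
    rw [mul_assoc, norm_mul]
    calc ‖q ^ i‖ * ‖z * w‖ ≤ 1 * ‖z * w‖ :=
        mul_le_mul_of_nonneg_right (hqpow1 i) (norm_nonneg _)
      _ = ‖z * w‖ := one_mul _
  have hxpow : ∀ (i n : ℕ), ‖(q ^ i * z * w) ^ n‖ ≤ ‖z * w‖ ^ n := by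
    intro i n
    rw [norm_pow]
    exact pow_le_pow_left₀ (norm_nonneg _) (hxnorm i) n
  set CP : ℝ := ∏ t ∈ Finset.range j, (1 + ‖q ^ (-(t:ℤ))‖) with hCP
  have hCP0 : 0 ≤ CP := Finset.prod_nonneg fun t _ => by positivity
  have hprodb : ∀ n : ℕ, ‖∏ t ∈ Finset.range j, (1 - q ^ (-(t:ℤ)) * q ^ n)‖ ≤ CP := by
    intro n
    rw [norm_prod, hCP]
    refine Finset.prod_le_prod (fun t _ => norm_nonneg _) (fun t _ => ?_)
    refine le_trans (norm_one_sub_le _) ?_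
    rw [norm_mul]
    have h1 : ‖q ^ (-(t:ℤ))‖ * ‖q ^ n‖ ≤ ‖q ^ (-(t:ℤ))‖ * 1 :=
      mul_le_mul_of_nonneg_left (hqpow1 n) (norm_nonneg _)
    linarith
  have hGb : ∀ (i n : ℕ), ‖poch (-q) q n * ((q ^ (i+m) * z * w) ^ n * eta2 q n)‖
      ≤ (CA * δ⁻¹) * ‖z * w‖ ^ n := by
    intro i n
    rw [norm_mul, norm_mul]
    calc ‖poch (-q) q n‖ * (‖(q ^ (i+m) * z * w) ^ n‖ * ‖eta2 q n‖)
        ≤ CA * (‖z * w‖ ^ n * δ⁻¹) := by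
          apply mul_le_mul (hpochb n) _ (by positivity) hCA0
          apply mul_le_mul (hxpow _ n) (heta2 n) (norm_nonneg _) (by positivity)
      _ = (CA * δ⁻¹) * ‖z * w‖ ^ n := by ring
  have hGsum : ∀ i : ℕ, Summable (fun n : ℕ => poch (-q) q n * ((q ^ (i+m) * z * w) ^ n * eta2 q n)) :=
    fun i => summable_geom_bound _ (norm_nonneg _) hzw (hGb i)
  have hFb : ∀ n : ℕ, ‖F n‖ ≤ (‖z ^ (-(j:ℤ))‖ * CP * (CA * δ⁻¹)) * ‖z * w‖ ^ n := by
    intro n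
    rw [hF]
    simp only
    rw [norm_mul, norm_mul]
    have h1 := hGb m n
    have hGm : ‖poch (-q) q n * ((q ^ m * z * w) ^ n * eta2 q n)‖
        ≤ (CA * δ⁻¹) * ‖z * w‖ ^ n := by
      have := hGb 0 n
      simpa using this
    calc ‖z ^ (-(j:ℤ))‖ * (‖∏ t ∈ Finset.range j, (1 - q ^ (-(t:ℤ)) * q ^ n)‖ *
          ‖poch (-q) q n * ((q ^ m * z * w) ^ n * eta2 q n)‖)
        ≤ ‖z ^ (-(j:ℤ))‖ * (CP * ((CA * δ⁻¹) * ‖z * w‖ ^ n)) := by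
          apply mul_le_mul_of_nonneg_left _ (norm_nonneg _)
          apply mul_le_mul (hprodb n) hGm (norm_nonneg _) hCP0
      _ = (‖z ^ (-(j:ℤ))‖ * CP * (CA * δ⁻¹)) * ‖z * w‖ ^ n := by ring
  have hFsum : Summable F := summable_geom_bound _ (norm_nonneg _) hzw hFb
  -- Step C : shift the sum
  have hshift : ∑' l : ℕ, eta1 q l * qpoch (q ^ 2) l *
      (zh z ((aM q)^[j] ((kk q)^[m] (zh w (eta2 q))))) l = ∑' n : ℕ, F n := by
    rw [tsum_congr hterm]
    have h := Summable.sum_add_tsum_nat_add j hFsum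
    have hzero : ∑ i ∈ Finset.range j, F i = 0 := by
      apply Finset.sum_eq_zero
      intro i hi
      rw [hF]
      simp only
      have hfac : (1 : ℂ) - q ^ (-(i:ℤ)) * q ^ i = 0 := by
        rw [← zpow_natCast q i, ← zpow_add₀ hq0]
        simp
      have : (∏ t ∈ Finset.range j, (1 - q ^ (-(t:ℤ)) * q ^ i)) = 0 :=
        Finset.prod_eq_zero hi hfac
      rw [this]
      ring
    rw [← h, hzero, zero_add]
  rw [hshift]
  -- Step D : expand the product into the q-binomial sum
  have hexpand : ∀ n : ℕ, F n = ∑ i ∈ Finset.range (j+1),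
      ((-1:ℂ)^i * q ^ (((i:ℤ) * ((i:ℤ)+1)) / 2 - (i:ℤ) * (j:ℤ)) * qbinom q j i) *
        (z ^ (-(j:ℤ)) * (poch (-q) q n * ((q ^ (i+m) * z * w) ^ n * eta2 q n))) := by
    intro n
    rw [hF]
    simp only
    rw [qbinom_expand hq hq0 j (q ^ n), Finset.sum_mul, Finset.mul_sum]
    apply Finset.sum_congr rfl
    intro i _
    have hpows : (q ^ n) ^ i * (q ^ m * z * w) ^ n = (q ^ (i+m) * z * w) ^ n := by
      rw [mul_pow, mul_pow, mul_pow, mul_pow, ← pow_mul, ← pow_mul, ← pow_mul]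
      rw [show (i+m)*n = n*i + m*n from by ring, pow_add]
      ring
    rw [← hpows]
    ring
  rw [tsum_congr hexpand]
  -- Step E : exchange sums and evaluate
  rw [Summable.tsum_finsetSum (fun i _ => ((hGsum i).mul_left _).mul_left _)]
  rw [Finset.mul_sum]
  apply Finset.sum_congr rfl
  intro i _
  rw [tsum_mul_left, tsum_mul_left]
  have hxi : ‖q ^ (i+m) * z * w‖ < 1 := lt_of_le_of_lt (hxnorm (i+m)) hzw
  rw [Slem hq hq0 hxi]
  have e1 : -q * (q ^ (i+m) * z * w)^2 = -(q ^ (2*i+2*m+1)) * z^2 * w^2 := by ring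
  have e2 : (q ^ (i+m) * z * w)^2 = q ^ (2*i+2*m) * z^2 * w^2 := by ring
  rw [e1, e2]
  ring
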